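/- Let n = n_1 + n_2 + … + n_t + s with n_1 ≥ n_2 ≥ … ≥ n_t ≥ p and n_1 < n - s - p(t-1). Then ρ(K_s ∨ (K_{n_1} ∪ K_{n_2} ∪ … ∪ K_{n_t})) < ρ(K_s ∨ (K_{n-s-p(t-1)} ∪ (t-1)K_p)). -/

import Mathlib

open Matrix BigOperators

open scoped Classical in
noncomputable def adjMat {V : Type*} [Fintype V] (G : SimpleGraph V) : Matrix V V ℝ :=
  Matrix.of fun a b => if G.Adj a b then (1 : ℝ) else 0

/-- The spectral radius of a real symmetric matrix: the largest (real) eigenvalue. -/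
noncomputable def specRad {V : Type*} [Fintype V] [DecidableEq V] (M : Matrix V V ℝ) : ℝ :=
  sSup {t : ℝ | Module.End.HasEigenvalue (Matrix.toLin' M) t}

def jcAux {s t : ℕ} {nn : Fin t → ℕ} :
    (Fin s ⊕ (Σ i : Fin t, Fin (nn i))) → (Fin s ⊕ (Σ i : Fin t, Fin (nn i))) → Prop
  | Sum.inl _, _ => True
  | Sum.inr ⟨i, _⟩, Sum.inr ⟨j, _⟩ => i = j
  | _, _ => False

/-- The join `K_s ∨ (K_{n 0} ∪ K_{n 1} ∪ ⋯ ∪ K_{n (t-1)})` of a clique of size `s`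
with the disjoint union of cliques of sizes `nn 0, …, nn (t-1)`. -/
def joinCliques (s : ℕ) {t : ℕ} (nn : Fin t → ℕ) :
    SimpleGraph (Fin s ⊕ (Σ i : Fin t, Fin (nn i))) where
  Adj a b := a ≠ b ∧ (jcAux a b ∨ jcAux b a)
  symm := ⟨fun a b h => ⟨h.1.symm, h.2.symm⟩⟩
  loopless := ⟨fun a h => h.1 rfl⟩

open Finset

section analytic
variable {V : Type*} [Fintype V] [DecidableEq V] [Nonempty V]

noncomputable def TcL (M : Matrix V V ℝ) : EuclideanSpace ℝ V →L[ℝ] EuclideanSpace ℝ V :=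
  LinearMap.toContinuousLinearMap (Matrix.toEuclideanLin M)

lemma TcL_apply (M : Matrix V V ℝ) (x : EuclideanSpace ℝ V) (i : V) :
    TcL M x i = M.mulVec x i := rfl

lemma inner_TcL (M : Matrix V V ℝ) (x : EuclideanSpace ℝ V) :
    (inner ℝ (TcL M x) x : ℝ) = ∑ i, (M.mulVec x) i * x i := by
  rw [PiLp.inner_apply]
  simp only [RCLike.inner_apply, conj_trivial, TcL_apply, mul_comm]

omit [Nonempty V] in
lemma isSymm_TcL {M : Matrix V V ℝ} (hM : M.IsHermitian) :
    (TcL M : EuclideanSpace ℝ V →ₗ[ℝ] EuclideanSpace ℝ V).IsSymmetric :=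
  (Matrix.isHermitian_iff_isSymmetric).1 hM

lemma bdd_ray (M : Matrix V V ℝ) (μ : ℝ)
    (hμ : μ ∈ Set.range fun x : { x : EuclideanSpace ℝ V // x ≠ 0 } =>
      (inner ℝ (TcL M x) x : ℝ) / ‖(x : EuclideanSpace ℝ V)‖ ^ 2) : μ ≤ ‖TcL M‖ := by
  obtain ⟨⟨x, hx⟩, rfl⟩ := hμ
  have h1 : (inner ℝ (TcL M x) x : ℝ) ≤ ‖TcL M x‖ * ‖x‖ := real_inner_le_norm _ _
  have h2 : ‖TcL M x‖ ≤ ‖TcL M‖ * ‖x‖ := (TcL M).le_opNorm x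
  have hx0 : (0:ℝ) < ‖x‖ := norm_pos_iff.2 hx
  rw [div_le_iff₀ (by positivity)]
  nlinarith [norm_nonneg (TcL M x), norm_nonneg (TcL M)]

lemma specRad_eq_iSup {M : Matrix V V ℝ} (hM : M.IsHermitian) :
    specRad M = ⨆ x : { x : EuclideanSpace ℝ V // x ≠ 0 },
      (inner ℝ (TcL M x) x : ℝ) / ‖(x : EuclideanSpace ℝ V)‖ ^ 2 := by
  set μ := ⨆ x : { x : EuclideanSpace ℝ V // x ≠ 0 },
      (inner ℝ (TcL M x) x : ℝ) / ‖(x : EuclideanSpace ℝ V)‖ ^ 2 with hμdef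
  have hsym := isSymm_TcL hM
  have hev : Module.End.HasEigenvalue
      (TcL M : EuclideanSpace ℝ V →ₗ[ℝ] EuclideanSpace ℝ V) μ := by
    have := hsym.hasEigenvalue_iSup_of_finiteDimensional
    convert this using 2 <;> rfl
  have hset : {t : ℝ | Module.End.HasEigenvalue (Matrix.toLin' M) t} =
      {t : ℝ | Module.End.HasEigenvalue
        (TcL M : EuclideanSpace ℝ V →ₗ[ℝ] EuclideanSpace ℝ V) t} := by
    ext t
    simp only [Set.mem_setOf_eq]
    constructor
    · intro h
      obtain ⟨v, hv⟩ := h.exists_hasEigenvector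
      have h1 : M.mulVec v = t • v := by simpa only [Matrix.toLin'_apply] using hv.apply_eq_smul
      rw [Module.End.hasEigenvalue_iff, Submodule.ne_bot_iff]
      refine ⟨WithLp.toLp 2 v, ?_, by simpa using hv.2⟩
      rw [Module.End.mem_eigenspace_iff]
      ext i
      simp [TcL_apply, h1]
    · intro h
      obtain ⟨v, hv⟩ := h.exists_hasEigenvector
      have h1 : TcL M v = t • v := hv.apply_eq_smul
      rw [Module.End.hasEigenvalue_iff, Submodule.ne_bot_iff]
      refine ⟨WithLp.ofLp v, ?_, by simpa using hv.2⟩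
      rw [Module.End.mem_eigenspace_iff, Matrix.toLin'_apply]
      funext i
      have := congrArg (fun z : EuclideanSpace ℝ V => z i) h1
      simpa [TcL_apply] using this
  have hub : ∀ ν ∈ {t : ℝ | Module.End.HasEigenvalue
        (TcL M : EuclideanSpace ℝ V →ₗ[ℝ] EuclideanSpace ℝ V) t}, ν ≤ μ := by
    intro ν hν
    obtain ⟨v, hv⟩ := hν.exists_hasEigenvector
    have hvec : (TcL M : EuclideanSpace ℝ V →ₗ[ℝ] EuclideanSpace ℝ V) v = ν • v :=
      hv.apply_eq_smul
    have hthis : (inner ℝ (TcL M v) v : ℝ) / ‖v‖ ^ 2 = ν := by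
      have : (TcL M) v = ν • v := hvec
      rw [this, real_inner_smul_left, real_inner_self_eq_norm_sq]
      have h0 : ‖v‖ ≠ 0 := norm_ne_zero_iff.2 hv.2
      field_simp
    calc ν = _ := hthis.symm
      _ ≤ μ := le_ciSup_of_le ⟨‖TcL M‖, fun z hz => bdd_ray M z hz⟩ ⟨v, hv.2⟩ le_rfl
  rw [specRad, hset]
  apply le_antisymm
  · exact csSup_le ⟨μ, hev⟩ hub
  · exact le_csSup ⟨μ, fun z hz => hub z hz⟩ hev

lemma rayleigh_le_specRad {M : Matrix V V ℝ} (hM : M.IsHermitian) {x : EuclideanSpace ℝ V}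
    (hx : x ≠ 0) : (inner ℝ (TcL M x) x : ℝ) / ‖x‖ ^ 2 ≤ specRad M := by
  rw [specRad_eq_iSup hM]
  exact le_ciSup_of_le ⟨‖TcL M‖, fun z hz => bdd_ray M z hz⟩ ⟨x, hx⟩ le_rfl

lemma specRad_hasEigenvalue {M : Matrix V V ℝ} (hM : M.IsHermitian) :
    Module.End.HasEigenvalue
      (TcL M : EuclideanSpace ℝ V →ₗ[ℝ] EuclideanSpace ℝ V) (specRad M) := by
  rw [specRad_eq_iSup hM]
  have := (isSymm_TcL hM).hasEigenvalue_iSup_of_finiteDimensional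
  convert this using 2 <;> rfl


lemma eucl_norm_sq (x : EuclideanSpace ℝ V) : ‖x‖ ^ 2 = ∑ i, x i ^ 2 := by
  rw [EuclideanSpace.norm_eq, Real.sq_sqrt (by positivity)]
  simp [sq_abs]

/-- Rayleigh bound in coordinates. -/
lemma dot_le_specRad {M : Matrix V V ℝ} (hM : M.IsHermitian) (x : V → ℝ) :
    ∑ i, M.mulVec x i * x i ≤ specRad M * ∑ i, x i ^ 2 := by
  by_cases hx : x = 0
  · simp [hx, Matrix.mulVec_zero]
  · have hx' : (WithLp.toLp 2 x : EuclideanSpace ℝ V) ≠ 0 := by simpa using hx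
    have h := rayleigh_le_specRad hM hx'
    rw [inner_TcL, eucl_norm_sq] at h
    have hpos : (0:ℝ) < ∑ i, x i ^ 2 := by
      have : ∃ i, x i ≠ 0 := by
        by_contra hc
        push_neg at hc
        exact hx (funext hc)
      obtain ⟨i, hi⟩ := this
      have : 0 < x i ^ 2 := by positivity
      exact lt_of_lt_of_le this (Finset.single_le_sum (fun j _ => sq_nonneg (x j))
        (Finset.mem_univ i))
    calc ∑ i, M.mulVec x i * x i
        = (∑ i, M.mulVec x i * x i) / (∑ i, x i ^ 2) * (∑ i, x i ^ 2) := by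
          field_simp
      _ ≤ specRad M * ∑ i, x i ^ 2 := by
          apply mul_le_mul_of_nonneg_right _ hpos.le
          exact h

/-- Existence of a nonnegative unit top eigenvector for a symmetric nonnegative matrix. -/
lemma exists_nonneg_eigenvector {M : Matrix V V ℝ} (hM : M.IsHermitian)
    (hnn : ∀ i j, 0 ≤ M i j) :
    ∃ x : V → ℝ, (∀ i, 0 ≤ x i) ∧ (∑ i, x i ^ 2 = 1) ∧
      M.mulVec x = specRad M • x := by
  obtain ⟨v, hv⟩ := (specRad_hasEigenvalue hM).exists_hasEigenvector
  set w : EuclideanSpace ℝ V := ‖v‖⁻¹ • v with hw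
  have hvn : ‖v‖ ≠ 0 := norm_ne_zero_iff.2 hv.2
  have hwnorm : ‖w‖ = 1 := by
    rw [hw, norm_smul, norm_inv, norm_norm, inv_mul_cancel₀ hvn]
  have hwev : (TcL M) w = specRad M • w := by
    have h1 : (TcL M : EuclideanSpace ℝ V →ₗ[ℝ] EuclideanSpace ℝ V) v = specRad M • v :=
      hv.apply_eq_smul
    have : (TcL M) w = ‖v‖⁻¹ • (TcL M) v := by rw [hw, _root_.map_smul]
    rw [this, show (TcL M) v = specRad M • v from h1, smul_comm]
  -- |w| entrywise
  set y : EuclideanSpace ℝ V := WithLp.toLp 2 (fun i => |w i| : V → ℝ) with hy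
  have hynorm : ‖y‖ = 1 := by
    have : ‖y‖ ^ 2 = ‖w‖ ^ 2 := by
      rw [eucl_norm_sq, eucl_norm_sq]
      exact Finset.sum_congr rfl fun i _ => by rw [hy]; simp [sq_abs]
    have h2 : ‖y‖ ^ 2 = 1 := by rw [this, hwnorm]; norm_num
    nlinarith [norm_nonneg (y : EuclideanSpace ℝ V)]
  have hy0 : y ≠ 0 := by
    intro h
    rw [h] at hynorm
    simp at hynorm
  -- Rayleigh of y is at least specRad
  have hray_ge : specRad M ≤ (inner ℝ (TcL M y) y : ℝ) := by
    have h1 : (inner ℝ (TcL M w) w : ℝ) = specRad M := by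
      rw [hwev, real_inner_smul_left, real_inner_self_eq_norm_sq, hwnorm]
      norm_num
    rw [← h1, inner_TcL, inner_TcL]
    apply Finset.sum_le_sum
    intro i _
    rw [Matrix.mulVec, Matrix.mulVec]
    have hdot : ∀ z : V → ℝ, (M i) ⬝ᵥ z * z i = ∑ j, M i j * z j * z i := by
      intro z
      rw [dotProduct, Finset.sum_mul]
    rw [hdot, hdot]
    calc ∑ j, M i j * w j * w i ≤ ∑ j, M i j * |w j| * |w i| := by
          apply Finset.sum_le_sum
          intro j _
          calc M i j * w j * w i ≤ |M i j * w j * w i| := le_abs_self _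
            _ = M i j * |w j| * |w i| := by
                rw [abs_mul, abs_mul, abs_of_nonneg (hnn i j)]
      _ = ∑ j, M i j * y j * y i := by
          apply Finset.sum_congr rfl
          intro j _
          rw [hy]
  have hray_le : (inner ℝ (TcL M y) y : ℝ) ≤ specRad M := by
    have := dot_le_specRad hM (y : V → ℝ)
    rw [inner_TcL]
    have hy2 : ∑ i, (y : V → ℝ) i ^ 2 = 1 := by
      have := eucl_norm_sq y
      rw [hynorm] at this
      simpa using this.symm
    rw [hy2, mul_one] at this
    exact this
  have heq : (inner ℝ (TcL M y) y : ℝ) = specRad M := le_antisymm hray_le hray_ge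
  -- y is a maximizer of the Rayleigh quotient on the unit sphere
  have hsa : IsSelfAdjoint (TcL M) :=
    ContinuousLinearMap.isSelfAdjoint_iff_isSymmetric.2 (isSymm_TcL hM)
  have hmax : IsMaxOn (TcL M).reApplyInnerSelf (Metric.sphere (0:EuclideanSpace ℝ V) ‖y‖) y := by
    intro z hz
    have hzn : ‖z‖ = 1 := by
      have := Metric.mem_sphere.1 hz
      rwa [dist_zero_right, hynorm] at this
    simp only [ContinuousLinearMap.reApplyInnerSelf, Set.mem_setOf_eq]
    have h1 : (inner ℝ (TcL M z) z : ℝ) ≤ specRad M := by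
      have := dot_le_specRad hM (z : V → ℝ)
      rw [inner_TcL]
      have hz2 : ∑ i, (z : V → ℝ) i ^ 2 = 1 := by
        have := eucl_norm_sq z
        rw [hzn] at this
        simpa using this.symm
      rw [hz2, mul_one] at this
      exact this
    calc (inner ℝ (TcL M z) z : ℝ) ≤ specRad M := h1
      _ = (inner ℝ (TcL M y) y : ℝ) := heq.symm
  have hev := hsa.hasEigenvector_of_isMaxOn hy0 hmax
  have hevy : (TcL M) y = specRad M • y := by
    have h1 := hev.apply_eq_smul
    have h2 : specRad M = ↑(⨆ x : { x : EuclideanSpace ℝ V // x ≠ 0 },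
        (TcL M).rayleighQuotient x) := by
      rw [specRad_eq_iSup hM]
      rfl
    rw [← h2] at h1
    exact h1
  refine ⟨(y : V → ℝ), fun i => by rw [hy]; exact abs_nonneg _, ?_, ?_⟩
  · have := eucl_norm_sq y
    rw [hynorm] at this
    simpa using this.symm
  · funext i
    have := congrArg (fun z : EuclideanSpace ℝ V => z i) hevy
    rw [TcL_apply] at this
    exact this

/-- Upper bound on specRad from a uniform Rayleigh bound. -/
lemma specRad_le_of_bound {M : Matrix V V ℝ} (hM : M.IsHermitian) (D : ℝ)
    (hD : ∀ x : V → ℝ, ∑ i, M.mulVec x i * x i ≤ D * ∑ i, x i ^ 2) :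
    specRad M ≤ D := by
  rw [specRad_eq_iSup hM]
  haveI : Nonempty {x : EuclideanSpace ℝ V // x ≠ 0} := by
    refine ⟨⟨WithLp.toLp 2 (fun _ => 1 : V → ℝ), ?_⟩⟩
    intro h
    have := congrArg (fun z : EuclideanSpace ℝ V => z (Classical.arbitrary V)) h
    simpa using this
  apply ciSup_le
  rintro ⟨x, hx⟩
  rw [inner_TcL, eucl_norm_sq]
  have hpos : (0:ℝ) < ∑ i, (x : V → ℝ) i ^ 2 := by
    have : ∃ i, (x : V → ℝ) i ≠ 0 := by
      by_contra hc
      push_neg at hc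
      exact hx (WithLp.ofLp_injective 2 (funext hc))
    obtain ⟨i, hi⟩ := this
    have h0 : 0 < (x : V → ℝ) i ^ 2 := by positivity
    exact lt_of_lt_of_le h0 (Finset.single_le_sum (f := fun j => (x : V → ℝ) j ^ 2)
      (fun j _ => sq_nonneg _) (Finset.mem_univ i))
  rw [div_le_iff₀ hpos]
  exact hD x

end analytic


section comb
variable {V : Type*} [Fintype V] [DecidableEq V]

/-- Label-graph adjacency matrix: vertices with label 0 dominate; equal nonzero labels
form cliques. -/
def lM (c : V → ℕ) : Matrix V V ℝ :=
  Matrix.of fun a b => if a ≠ b ∧ (c a = 0 ∨ c b = 0 ∨ c a = c b) then 1 else 0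

lemma lM_apply (c : V → ℕ) (a b : V) :
    lM c a b = if a ≠ b ∧ (c a = 0 ∨ c b = 0 ∨ c a = c b) then 1 else 0 := rfl

lemma lM_symm_entry (c : V → ℕ) (a b : V) : lM c a b = lM c b a := by
  rw [lM_apply, lM_apply]
  apply if_congr _ rfl rfl
  constructor
  · rintro ⟨h1, h2⟩
    exact ⟨h1.symm, by tauto⟩
  · rintro ⟨h1, h2⟩
    exact ⟨h1.symm, by tauto⟩

lemma lM_herm (c : V → ℕ) : (lM c).IsHermitian := by
  ext i j
  simp only [conjTranspose_apply, star_trivial]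
  exact lM_symm_entry c j i

lemma lM_nonneg (c : V → ℕ) (a b : V) : 0 ≤ lM c a b := by
  rw [lM_apply]
  split <;> norm_num

lemma lM_diag (c : V → ℕ) (a : V) : lM c a a = 0 := by
  rw [lM_apply]
  simp

/-- fiber of a label -/
def Ff (c : V → ℕ) (k : ℕ) : Finset V := Finset.univ.filter fun v => c v = k

lemma Ff_disj (c : V → ℕ) {k l : ℕ} (h : k ≠ l) : Disjoint (Ff c k) (Ff c l) := by
  simp only [Ff, Finset.disjoint_filter]
  intro v _ hv hv'
  exact h (hv ▸ hv' ▸ rfl)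

lemma mulVec_lM {c : V → ℕ} (x : V → ℝ) {v : V} (h0 : c v ≠ 0) :
    (lM c).mulVec x v =
      (∑ w ∈ Ff c 0, x w) + (∑ w ∈ Ff c (c v), x w) - x v := by
  have hterm : ∀ w, lM c v w * x w =
      if (c w = 0 ∨ c w = c v) then (if w = v then 0 else x w) else 0 := by
    intro w
    rw [lM_apply]
    by_cases hvw : v = w
    · subst hvw
      simp [h0]
    · by_cases hc : c w = 0 ∨ c w = c v
      · have : c v = 0 ∨ c w = 0 ∨ c v = c w := by tauto
        rw [if_pos ⟨hvw, this⟩, if_pos hc, if_neg (Ne.symm hvw), one_mul]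
      · have : ¬ (v ≠ w ∧ (c v = 0 ∨ c w = 0 ∨ c v = c w)) := by tauto
        rw [if_neg this, if_neg hc, zero_mul]
  rw [Matrix.mulVec, show (lM c v) ⬝ᵥ x = ∑ w, lM c v w * x w from rfl]
  rw [Finset.sum_congr rfl fun w _ => hterm w]
  rw [← Finset.sum_filter]
  have hset : Finset.univ.filter (fun w => c w = 0 ∨ c w = c v) =
      Ff c 0 ∪ Ff c (c v) := by
    ext w
    simp [Ff]
  rw [hset, Finset.sum_union (Ff_disj c (Ne.symm h0))]
  have hv_mem : v ∈ Ff c (c v) := by simp [Ff]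
  have hv_not : v ∉ Ff c 0 := by simp [Ff, h0]
  have key : ∀ (S : Finset V), v ∈ S →
      ∑ w ∈ S, (if w = v then 0 else x w) = (∑ w ∈ S, x w) - x v := by
    intro S hv
    rw [← Finset.sum_erase_add S _ hv, if_pos rfl, add_zero,
      Finset.sum_congr rfl (fun w hw => if_neg (Finset.ne_of_mem_erase hw)),
      Finset.sum_erase_eq_sub hv]
  rw [key _ hv_mem,
    Finset.sum_congr rfl (fun w hw => if_neg (by rintro rfl; exact hv_not hw))]
  ring

lemma mulVec_lM0 {c : V → ℕ} (x : V → ℝ) {v : V} (h0 : c v = 0) :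
    (lM c).mulVec x v = (∑ w, x w) - x v := by
  have hterm : ∀ w, lM c v w * x w = if w = v then 0 else x w := by
    intro w
    rw [lM_apply]
    by_cases hvw : v = w
    · subst hvw
      simp
    · rw [if_pos ⟨hvw, Or.inl h0⟩, if_neg (Ne.symm hvw), one_mul]
  rw [Matrix.mulVec, show (lM c v) ⬝ᵥ x = ∑ w, lM c v w * x w from rfl,
    Finset.sum_congr rfl fun w _ => hterm w]
  rw [← Finset.sum_erase_add Finset.univ _ (Finset.mem_univ v), if_pos rfl, add_zero,
    Finset.sum_congr rfl (fun w hw => if_neg (Finset.ne_of_mem_erase hw)),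
    Finset.sum_erase_eq_sub (Finset.mem_univ v)]


/-- Lower bound for specRad from a clique. -/
lemma clique_le_specRad (c : V → ℕ) (C : Finset V)
    (hC : ∀ a ∈ C, ∀ b ∈ C, a ≠ b → (c a = 0 ∨ c b = 0 ∨ c a = c b))
    (hne : C.Nonempty) : (C.card : ℝ) - 1 ≤ specRad (lM c) := by
  haveI : Nonempty V := ⟨hne.choose⟩
  set x : V → ℝ := fun w => if w ∈ C then 1 else 0 with hx
  have hx2 : ∑ i, x i ^ 2 = (C.card : ℝ) := by
    rw [hx]
    simp [ite_pow, Finset.sum_ite_mem]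
  have hdot : ∑ i, (lM c).mulVec x i * x i = (C.card : ℝ) * ((C.card : ℝ) - 1) := by
    have hrow : ∀ i ∈ C, (lM c).mulVec x i = (C.card : ℝ) - 1 := by
      intro i hi
      rw [Matrix.mulVec, show (lM c i) ⬝ᵥ x = ∑ j, lM c i j * x j from rfl]
      have : ∀ j, lM c i j * x j = if j ∈ C.erase i then 1 else 0 := by
        intro j
        rw [hx, lM_apply]
        by_cases hj : j ∈ C
        · by_cases hij : i = j
          · subst hij
            simp [hj]
          · rw [if_pos ⟨hij, hC i hi j hj hij⟩]
            simp [hj, Finset.mem_erase, Ne.symm hij]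
        · have hj' : j ∉ C.erase i := fun h => hj (Finset.mem_of_mem_erase h)
          simp [hj, hj']
      rw [Finset.sum_congr rfl fun j _ => this j]
      rw [Finset.sum_ite_mem, Finset.univ_inter, Finset.sum_const, nsmul_eq_mul, mul_one,
        Finset.card_erase_of_mem hi]
      have : (1:ℕ) ≤ C.card := Finset.card_pos.2 ⟨i, hi⟩
      push_cast [this]
      ring
    calc ∑ i, (lM c).mulVec x i * x i = ∑ i ∈ C, (lM c).mulVec x i := by
          rw [hx]
          rw [Finset.sum_congr rfl (fun i _ => by
            rw [mul_ite, mul_one, mul_zero])]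
          rw [← Finset.sum_filter, Finset.filter_mem_eq_inter, Finset.univ_inter]
      _ = ∑ i ∈ C, ((C.card : ℝ) - 1) := Finset.sum_congr rfl hrow
      _ = (C.card : ℝ) * ((C.card : ℝ) - 1) := by
          rw [Finset.sum_const, nsmul_eq_mul]
  have := dot_le_specRad (lM_herm c) x
  rw [hdot, hx2] at this
  have hcpos : (0:ℝ) < (C.card : ℝ) := by
    exact_mod_cast Finset.card_pos.2 hne
  nlinarith

/-- specRad is invariant under relabeling of indices. -/
lemma specRad_submatrix {W : Type*} [Fintype W] [DecidableEq W] (e : W ≃ V)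
    (M : Matrix V V ℝ) : specRad (M.submatrix e e) = specRad M := by
  have key : ∀ (μ : ℝ), Module.End.HasEigenvalue (Matrix.toLin' (M.submatrix e e)) μ ↔
      Module.End.HasEigenvalue (Matrix.toLin' M) μ := by
    intro μ
    constructor
    · intro h
      obtain ⟨v, hv⟩ := h.exists_hasEigenvector
      rw [Module.End.hasEigenvalue_iff]
      rw [Submodule.ne_bot_iff]
      refine ⟨v ∘ e.symm, ?_, ?_⟩
      · rw [Module.End.mem_eigenspace_iff]
        have h1 : (M.submatrix e e).mulVec v = μ • v := by
          have := hv.apply_eq_smul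
          simpa only [Matrix.toLin'_apply] using this
        have h2 : (M.submatrix e e).mulVec v = (M.mulVec (v ∘ e.symm)) ∘ e :=
          Matrix.submatrix_mulVec_equiv M v e e
        rw [Matrix.toLin'_apply]
        funext i
        have := congrFun h2 (e.symm i)
        rw [h1] at this
        simpa using this.symm
      · intro hzero
        apply hv.2
        funext w
        have := congrFun hzero (e w)
        simpa using this
    · intro h
      obtain ⟨v, hv⟩ := h.exists_hasEigenvector
      rw [Module.End.hasEigenvalue_iff, Submodule.ne_bot_iff]
      refine ⟨v ∘ e, ?_, ?_⟩
      · rw [Module.End.mem_eigenspace_iff]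
        have h1 : M.mulVec v = μ • v := by
          have := hv.apply_eq_smul
          simpa only [Matrix.toLin'_apply] using this
        have h2 : (M.submatrix e e).mulVec (v ∘ e) = (M.mulVec ((v ∘ e) ∘ e.symm)) ∘ e :=
          Matrix.submatrix_mulVec_equiv M (v ∘ e) e e
        rw [Matrix.toLin'_apply]
        have h3 : (v ∘ e) ∘ e.symm = v := by
          funext i
          simp
        rw [h3, h1] at h2
        funext i
        have := congrFun h2 i
        simpa using this
      · intro hzero
        apply hv.2
        funext w
        have := congrFun hzero (e.symm w)
        simpa using this
  unfold specRad
  congr 1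
  ext μ
  exact key μ

lemma lM_comp (c : V → ℕ) {W : Type*} [Fintype W] [DecidableEq W] (e : W ≃ V) :
    lM (c ∘ e) = (lM c).submatrix e e := by
  ext a b
  rw [Matrix.submatrix_apply, lM_apply, lM_apply]
  apply if_congr _ rfl rfl
  simp only [Function.comp_apply]
  constructor
  · rintro ⟨h1, h2⟩
    exact ⟨fun h => h1 (e.injective h), h2⟩
  · rintro ⟨h1, h2⟩
    exact ⟨fun h => h1 (by rw [h]), h2⟩

end comb



section stepsec
variable {V : Type*} [Fintype V] [DecidableEq V]

set_option maxHeartbeats 2000000 in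
lemma step_lt (c : V → ℕ) (u : V)
    (hs : (Ff c 0).Nonempty)
    (hu0 : c u ≠ 0) (hu1 : c u ≠ 1)
    (hF : (Ff c (c u)).card ≤ (Ff c 1).card) :
    specRad (lM c) < specRad (lM (Function.update c u 1)) := by
  haveI : Nonempty V := ⟨u⟩
  set lam := specRad (lM c) with hlam
  obtain ⟨x, hx0, hx2, hxe⟩ := exists_nonneg_eigenvector (lM_herm c) (lM_nonneg c)
  set S := ∑ w ∈ Ff c 0, x w with hSdef
  set sig : ℕ → ℝ := fun k => ∑ w ∈ Ff c k, x w with hsig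
  -- basic cardinalities
  have humem : u ∈ Ff c (c u) := by simp [Ff]
  have hFl1 : 1 ≤ (Ff c (c u)).card := Finset.card_pos.2 ⟨u, humem⟩
  have hF11 : 1 ≤ (Ff c 1).card := le_trans hFl1 hF
  have hs1 : 1 ≤ (Ff c 0).card := Finset.card_pos.2 hs
  -- lam ≥ card (Ff c 0 ∪ Ff c k) - 1 for nonempty fibers k ≠ 0
  have hclique : ∀ k : ℕ, k ≠ 0 → (Ff c k).Nonempty →
      ((Ff c 0).card : ℝ) + ((Ff c k).card : ℝ) - 1 ≤ lam := by
    intro k hk hkne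
    have hC : ∀ a ∈ Ff c 0 ∪ Ff c k, ∀ b ∈ Ff c 0 ∪ Ff c k, a ≠ b →
        (c a = 0 ∨ c b = 0 ∨ c a = c b) := by
      intro a ha b hb _
      simp only [Finset.mem_union, Ff, Finset.mem_filter] at ha hb
      rcases ha with ⟨_, ha⟩ | ⟨_, ha⟩
      · exact Or.inl ha
      · rcases hb with ⟨_, hb⟩ | ⟨_, hb⟩
        · exact Or.inr (Or.inl hb)
        · exact Or.inr (Or.inr (ha.trans hb.symm))
    have := clique_le_specRad c (Ff c 0 ∪ Ff c k) hC (hs.mono Finset.subset_union_left)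
    rw [Finset.card_union_of_disjoint (Ff_disj c (Ne.symm hk))] at this
    push_cast at this
    linarith [this]
  have hlam1 : ((Ff c 0).card : ℝ) + ((Ff c 1).card : ℝ) - 1 ≤ lam :=
    hclique 1 one_ne_zero (Finset.card_pos.1 hF11)
  have hlaml : ((Ff c 0).card : ℝ) + ((Ff c (c u)).card : ℝ) - 1 ≤ lam :=
    hclique (c u) hu0 ⟨u, humem⟩
  have hlampos : (0:ℝ) < lam + 1 := by
    have : (1:ℝ) ≤ ((Ff c 0).card : ℝ) := by exact_mod_cast hs1
    have : (1:ℝ) ≤ ((Ff c 1).card : ℝ) := by exact_mod_cast hF11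
    linarith
  -- eigen equation
  have heig : ∀ v : V, (lM c).mulVec x v = lam * x v := by
    intro v
    have := congrFun hxe v
    simpa using this
  have heqn : ∀ v : V, c v ≠ 0 → (lam + 1) * x v = S + sig (c v) := by
    intro v hv
    have h1 := heig v
    rw [mulVec_lM x hv] at h1
    simp only [hsig, hSdef]
    linarith [h1]
  -- S > 0
  have hSnonneg : 0 ≤ S := Finset.sum_nonneg fun w _ => hx0 w
  have hsignn : ∀ k, 0 ≤ sig k := fun k => Finset.sum_nonneg fun w _ => hx0 w
  have hSpos : 0 < S := by
    rcases lt_or_eq_of_le hSnonneg with h | h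
    · exact h
    have hzero : ∀ w ∈ Ff c 0, x w = 0 := by
      intro w hw
      have := (Finset.sum_eq_zero_iff_of_nonneg fun w _ => hx0 w).1 h.symm
      exact this w hw
    obtain ⟨w0, hw0⟩ := hs
    have hcw0 : c w0 = 0 := by simpa [Ff] using hw0
    have h1 := heig w0
    rw [mulVec_lM0 x hcw0] at h1
    have hxw0 : x w0 = 0 := hzero w0 hw0
    have hsum0 : ∑ w, x w = 0 := by
      rw [hxw0] at h1
      linarith [h1]
    have hall : ∀ w, x w = 0 :=
      fun w => (Finset.sum_eq_zero_iff_of_nonneg fun w _ => hx0 w).1 hsum0 w (mem_univ w)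
    have : (1:ℝ) = 0 := by
      rw [← hx2]
      apply Finset.sum_eq_zero
      intro i _
      rw [hall i]
      ring
    norm_num at this
  -- fiber sums
  have hfib : ∀ k : ℕ, k ≠ 0 → (lam + 1) * sig k = ((Ff c k).card : ℝ) * (S + sig k) := by
    intro k hk
    have : ∑ v ∈ Ff c k, ((lam + 1) * x v) = ∑ v ∈ Ff c k, (S + sig k) := by
      apply Finset.sum_congr rfl
      intro v hv
      have hcv : c v = k := by simpa [Ff] using hv
      rw [heqn v (hcv ▸ hk), hcv]
    rw [← Finset.mul_sum] at this
    rw [show (∑ w ∈ Ff c k, x w) = sig k from rfl] at this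
    rw [this, Finset.sum_const, nsmul_eq_mul]
  -- notation
  set F1 : ℝ := ((Ff c 1).card : ℝ) with hF1def
  set Fl : ℝ := ((Ff c (c u)).card : ℝ) with hFldef
  set s0 : ℝ := ((Ff c 0).card : ℝ) with hs0def
  have hs0ge : (1:ℝ) ≤ s0 := by rw [hs0def]; exact_mod_cast hs1
  have hFlge : (1:ℝ) ≤ Fl := by rw [hFldef]; exact_mod_cast hFl1
  have hF1Fl : Fl ≤ F1 := by rw [hFldef, hF1def]; exact_mod_cast hF
  have hD1 : 1 ≤ lam + 1 - F1 := by rw [hF1def]; linarith [hlam1]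
  have hDl : 1 ≤ lam + 1 - Fl := by rw [hFldef]; linarith [hlaml]
  have hsig1 : sig 1 * (lam + 1 - F1) = F1 * S := by
    have h := hfib 1 one_ne_zero
    rw [← hF1def] at h
    linear_combination h
  have hsigl : sig (c u) * (lam + 1 - Fl) = Fl * S := by
    have h := hfib (c u) hu0
    rw [← hFldef] at h
    linear_combination h
  -- sig 1 ≥ sig l
  have hsigmono : sig (c u) ≤ sig 1 := by
    have hkey : sig (c u) * ((lam + 1 - F1) * (lam + 1 - Fl)) ≤
        sig 1 * ((lam + 1 - F1) * (lam + 1 - Fl)) := by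
      have e1 : sig 1 * ((lam + 1 - F1) * (lam + 1 - Fl)) = F1 * S * (lam + 1 - Fl) := by
        linear_combination (lam + 1 - Fl) * hsig1
      have e2 : sig (c u) * ((lam + 1 - F1) * (lam + 1 - Fl)) =
          Fl * S * (lam + 1 - F1) := by linear_combination (lam + 1 - F1) * hsigl
      rw [e1, e2]
      nlinarith [mul_nonneg (mul_nonneg hSpos.le (sub_nonneg.2 hF1Fl)) hlampos.le]
    have hpos : 0 < (lam + 1 - F1) * (lam + 1 - Fl) := by nlinarith
    exact le_of_mul_le_mul_right hkey hpos
  -- x u > 0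
  have hxu : (lam + 1) * x u = S + sig (c u) := heqn u hu0
  have hxupos : 0 < x u := by nlinarith [hsignn (c u), hSpos, hlampos, hxu, hx0 u]
  -- the updated matrix
  set c' := Function.update c u 1 with hc'
  have hceq : ∀ v, v ≠ u → c' v = c v := fun v hv => Function.update_of_ne hv 1 c
  have hcu' : c' u = 1 := Function.update_self u 1 c
  have hFf0 : Ff c' 0 = Ff c 0 := by
    ext w
    simp only [Ff, Finset.mem_filter, Finset.mem_univ, true_and]
    by_cases hw : w = u
    · subst hw
      rw [hcu']
      simp [hu0]
    · rw [hceq w hw]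
  have hFf1 : Ff c' 1 = insert u (Ff c 1) := by
    ext w
    simp only [Ff, Finset.mem_filter, Finset.mem_univ, true_and, Finset.mem_insert]
    by_cases hw : w = u
    · subst hw
      rw [hcu']
      simp
    · rw [hceq w hw]
      simp [hw]
  have hunotin1 : u ∉ Ff c 1 := by simp [Ff, hu1]
  -- row u difference
  have hrowu' : (lM c').mulVec x u = S + sig 1 := by
    rw [mulVec_lM x (by rw [hcu']; norm_num : c' u ≠ 0), hcu', hFf0, hFf1,
      Finset.sum_insert hunotin1]
    simp only [hSdef, hsig]
    ring
  have hrowu : (lM c).mulVec x u = S + sig (c u) - x u := by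
    rw [mulVec_lM x hu0]
  -- entries off u agree
  have hentry : ∀ i j, i ≠ u → j ≠ u → lM c' i j = lM c i j := by
    intro i j hi hj
    rw [lM_apply, lM_apply, hceq i hi, hceq j hj]
  -- rows off u
  have hrow' : ∀ i, i ≠ u → (lM c').mulVec x i =
      (lM c).mulVec x i + (lM c' i u - lM c i u) * x u := by
    intro i hi
    rw [Matrix.mulVec, Matrix.mulVec, show (lM c' i) ⬝ᵥ x = ∑ j, lM c' i j * x j from rfl,
      show (lM c i) ⬝ᵥ x = ∑ j, lM c i j * x j from rfl]
    rw [← Finset.sum_erase_add Finset.univ _ (Finset.mem_univ u),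
      ← Finset.sum_erase_add Finset.univ (fun j => lM c i j * x j) (Finset.mem_univ u)]
    rw [Finset.sum_congr rfl (fun j hj => by
      rw [hentry i j hi (Finset.ne_of_mem_erase hj)])]
    ring
  -- the Rayleigh quotient of x for lM c'
  have hdot' : ∑ i, (lM c').mulVec x i * x i = lam + 2 * x u * (sig 1 - sig (c u) + x u) := by
    have hAdot : ∑ i, (lM c).mulVec x i * x i = lam := by
      rw [Finset.sum_congr rfl (fun i _ => by rw [heig i])]
      have : ∑ i, lam * x i * x i = lam * ∑ i, x i ^ 2 := by
        rw [Finset.mul_sum]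
        apply Finset.sum_congr rfl
        intro i _
        ring
      rw [this, hx2, mul_one]
    have hsplit : ∀ f : V → ℝ, ∑ i, f i = ∑ i ∈ Finset.univ.erase u, f i + f u := by
      intro f
      rw [Finset.sum_erase_add]
      exact Finset.mem_univ u
    rw [hsplit (fun i => (lM c').mulVec x i * x i),
      hsplit (fun i => (lM c).mulVec x i * x i)] at *
    rw [Finset.sum_congr rfl (fun i hi => by
      rw [hrow' i (Finset.ne_of_mem_erase hi)])]
    have hexpand : ∑ i ∈ Finset.univ.erase u,
        (((lM c).mulVec x i + (lM c' i u - lM c i u) * x u) * x i) =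
        ∑ i ∈ Finset.univ.erase u, ((lM c).mulVec x i * x i) +
        (∑ i ∈ Finset.univ.erase u, (lM c' i u - lM c i u) * x i) * x u := by
      rw [Finset.sum_mul, ← Finset.sum_add_distrib]
      apply Finset.sum_congr rfl
      intro i _
      ring
    rw [hexpand]
    -- compute the correction sum
    have hcorr : ∑ i ∈ Finset.univ.erase u, (lM c' i u - lM c i u) * x i =
        sig 1 - sig (c u) + x u := by
      have hsym : ∀ i, lM c' i u - lM c i u = lM c' u i - lM c u i := by
        intro i
        rw [lM_symm_entry c' i u, lM_symm_entry c i u]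
      rw [Finset.sum_congr rfl (fun i _ => by rw [hsym i])]
      have : ∑ i ∈ Finset.univ.erase u, (lM c' u i - lM c u i) * x i =
          ∑ i, (lM c' u i - lM c u i) * x i := by
        rw [hsplit (fun i => (lM c' u i - lM c u i) * x i)]
        rw [lM_diag, lM_diag]
        ring
      rw [this]
      have : ∑ i, (lM c' u i - lM c u i) * x i =
          (lM c').mulVec x u - (lM c).mulVec x u := by
        rw [Matrix.mulVec, Matrix.mulVec,
          show (lM c' u) ⬝ᵥ x = ∑ j, lM c' u j * x j from rfl,
          show (lM c u) ⬝ᵥ x = ∑ j, lM c u j * x j from rfl, ← Finset.sum_sub_distrib]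
        apply Finset.sum_congr rfl
        intro i _
        ring
      rw [this, hrowu', hrowu]
      ring
    rw [hcorr]
    have hu_row' : (lM c').mulVec x u * x u =
        ((lM c).mulVec x u + (sig 1 - sig (c u) + x u)) * x u := by
      rw [hrowu', hrowu]
      ring
    rw [hu_row', ← hAdot]
    ring
  -- conclude
  have hfinal := dot_le_specRad (lM_herm c') x
  rw [hdot', hx2, mul_one] at hfinal
  have hgap : 0 < 2 * x u * (sig 1 - sig (c u) + x u) := by
    have : 0 < sig 1 - sig (c u) + x u := by linarith [hsigmono, hxupos]
    nlinarith
  linarith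


lemma Ff_update_eq_self {c : V → ℕ} {u : V} {j : ℕ} (hj1 : j ≠ 1) (hju : j ≠ c u) :
    Ff (Function.update c u 1) j = Ff c j := by
  ext w
  simp only [Ff, Finset.mem_filter, Finset.mem_univ, true_and]
  by_cases hw : w = u
  · subst hw
    rw [Function.update_self]
    constructor
    · intro h
      exact absurd h.symm hj1
    · intro h
      exact absurd h.symm hju
  · rw [Function.update_of_ne hw]

lemma Ff_update_one {c : V → ℕ} {u : V} (hu1 : c u ≠ 1) :
    Ff (Function.update c u 1) 1 = insert u (Ff c 1) := by
  ext w
  simp only [Ff, Finset.mem_filter, Finset.mem_univ, true_and, Finset.mem_insert]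
  by_cases hw : w = u
  · subst hw
    rw [Function.update_self]
    simp
  · rw [Function.update_of_ne hw]
    simp [hw]

lemma Ff_update_old {c : V → ℕ} {u : V} (hu1 : c u ≠ 1) :
    Ff (Function.update c u 1) (c u) = (Ff c (c u)).erase u := by
  ext w
  simp only [Ff, Finset.mem_filter, Finset.mem_univ, true_and, Finset.mem_erase]
  by_cases hw : w = u
  · subst hw
    rw [Function.update_self]
    simp [Ne.symm hu1]
  · rw [Function.update_of_ne hw]
    simp [hw]

/-- The chain of moves: any admissible configuration has spectral radius at most that of the
extremal one, and strictly less if it is not extremal. -/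
lemma chain_le (t p s : ℕ) (R : ℝ)
    (hbase : ∀ c : V → ℕ, (∀ v, c v ≤ t) → (Ff c 0).card = s →
      (∀ k, 2 ≤ k → (Ff c k).card ≤ (Ff c 1).card) →
      (∀ k, 2 ≤ k → k ≤ t → (Ff c k).card = p) → specRad (lM c) ≤ R) :
    ∀ (m : ℕ) (c : V → ℕ), (∑ k ∈ Finset.Icc 2 t, (Ff c k).card) = m →
      (∀ v, c v ≤ t) → (Ff c 0).Nonempty → (Ff c 0).card = s →
      (∀ k, 2 ≤ k → (Ff c k).card ≤ (Ff c 1).card) →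
      (∀ k, 2 ≤ k → k ≤ t → p ≤ (Ff c k).card) →
      specRad (lM c) ≤ R ∧
        ((∃ k, 2 ≤ k ∧ k ≤ t ∧ p < (Ff c k).card) → specRad (lM c) < R) := by
  intro m
  induction m using Nat.strong_induction_on with
  | _ m IH =>
    intro c hm ha hb hb2 hc hd
    by_cases hall : ∀ k, 2 ≤ k → k ≤ t → (Ff c k).card = p
    · refine ⟨hbase c ha hb2 hc hall, ?_⟩
      rintro ⟨k, hk2, hkt, hkp⟩
      rw [hall k hk2 hkt] at hkp
      exact absurd hkp (lt_irrefl p)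
    · push_neg at hall
      obtain ⟨k, hk2, hkt, hkp⟩ := hall
      have hklt : p < (Ff c k).card := lt_of_le_of_ne (hd k hk2 hkt) (Ne.symm hkp)
      have hkpos : 0 < (Ff c k).card := lt_of_le_of_lt (Nat.zero_le p) hklt
      obtain ⟨u, hu⟩ := Finset.card_pos.1 hkpos
      have hcu : c u = k := by simpa [Ff] using hu
      have hu0 : c u ≠ 0 := by omega
      have hu1 : c u ≠ 1 := by omega
      -- strict step
      have hstep : specRad (lM c) < specRad (lM (Function.update c u 1)) := by
        apply step_lt c u hb hu0 hu1
        rw [hcu]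
        exact hc k hk2
      set c' := Function.update c u 1 with hc'def
      have hcu_mem : u ∈ Ff c (c u) := by simp [Ff]
      -- fiber facts for c'
      have hFf1' : Ff c' 1 = insert u (Ff c 1) := Ff_update_one hu1
      have hFfk' : Ff c' (c u) = (Ff c (c u)).erase u := Ff_update_old hu1
      have hFfother : ∀ j, j ≠ 1 → j ≠ k → Ff c' j = Ff c j := by
        intro j hj1 hjk
        exact Ff_update_eq_self hj1 (by rw [hcu]; exact hjk)
      have hunotin1 : u ∉ Ff c 1 := by simp [Ff, hu1]
      have hcard1' : (Ff c' 1).card = (Ff c 1).card + 1 := by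
        rw [hFf1', Finset.card_insert_of_notMem hunotin1]
      have hcardk' : (Ff c' k).card = (Ff c k).card - 1 := by
        rw [← hcu, hFfk', Finset.card_erase_of_mem hcu_mem, hcu]
      -- new invariants
      have ha' : ∀ v, c' v ≤ t := by
        intro v
        by_cases hv : v = u
        · subst hv
          rw [hc'def, Function.update_self]
          omega
        · rw [hc'def, Function.update_of_ne hv]
          exact ha v
      have hb' : (Ff c' 0).Nonempty := by
        rwa [hFfother 0 (by omega) (by omega)]
      have hb2' : (Ff c' 0).card = s := by
        rwa [hFfother 0 (by omega) (by omega)]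
      have hc'inv : ∀ j, 2 ≤ j → (Ff c' j).card ≤ (Ff c' 1).card := by
        intro j hj2
        rw [hcard1']
        by_cases hjk : j = k
        · subst hjk
          rw [hcardk']
          have := hc j hj2
          omega
        · rw [hFfother j (by omega) hjk]
          have := hc j hj2
          omega
      have hd' : ∀ j, 2 ≤ j → j ≤ t → p ≤ (Ff c' j).card := by
        intro j hj2 hjt
        by_cases hjk : j = k
        · subst hjk
          rw [hcardk']
          omega
        · rw [hFfother j (by omega) hjk]
          exact hd j hj2 hjt
      -- measure decreases
      have hmeas : (∑ j ∈ Finset.Icc 2 t, (Ff c' j).card) = m - 1 ∧ 1 ≤ m := by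
        have hsum : ∑ j ∈ Finset.Icc 2 t, (Ff c' j).card =
            (∑ j ∈ Finset.Icc 2 t, (Ff c j).card) - 1 := by
          have hkmem : k ∈ Finset.Icc 2 t := Finset.mem_Icc.2 ⟨hk2, hkt⟩
          rw [← Finset.sum_erase_add _ _ hkmem, ← Finset.sum_erase_add _
            (fun j => (Ff c j).card) hkmem]
          rw [Finset.sum_congr rfl (fun j hj => by
            rw [hFfother j ?_ (Finset.ne_of_mem_erase hj)]
            have := Finset.mem_Icc.1 (Finset.mem_of_mem_erase hj)
            omega)]
          rw [hcardk']
          omega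
        constructor
        · rw [hsum, hm]
        · have hkmem : k ∈ Finset.Icc 2 t := Finset.mem_Icc.2 ⟨hk2, hkt⟩
          rw [← hm]
          calc 1 ≤ (Ff c k).card := hkpos
            _ ≤ ∑ j ∈ Finset.Icc 2 t, (Ff c j).card :=
              Finset.single_le_sum (f := fun j => (Ff c j).card) (fun j _ => Nat.zero_le _) hkmem
      obtain ⟨hm', hm1⟩ := hmeas
      have hIH := IH (m - 1) (by omega) c' hm' ha' hb' hb2' hc'inv hd'
      exact ⟨le_of_lt (lt_of_lt_of_le hstep hIH.1),
        fun _ => lt_of_lt_of_le hstep hIH.1⟩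

end stepsec

/-- canonical labeling of the vertex type of `joinCliques` -/
def dlab (s : ℕ) {t : ℕ} (nn : Fin t → ℕ) : (Fin s ⊕ (Σ i : Fin t, Fin (nn i))) → ℕ :=
  Sum.elim (fun _ => 0) (fun b => (b.1 : ℕ) + 1)

open scoped Classical in
lemma adjMat_apply {W : Type*} [Fintype W] (G : SimpleGraph W) (a b : W) :
    adjMat G a b = if G.Adj a b then (1:ℝ) else 0 := rfl

lemma adjMat_joinCliques (s : ℕ) {t : ℕ} (nn : Fin t → ℕ) :
    adjMat (joinCliques s nn) = lM (dlab s nn) := by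
  ext a b
  rw [adjMat_apply, lM_apply]
  have hiff : (joinCliques s nn).Adj a b ↔
      (a ≠ b ∧ (dlab s nn a = 0 ∨ dlab s nn b = 0 ∨ dlab s nn a = dlab s nn b)) := by
    show (a ≠ b ∧ (jcAux a b ∨ jcAux b a)) ↔ _
    constructor
    · rintro ⟨h1, h2⟩
      refine ⟨h1, ?_⟩
      rcases a with a | ⟨i, y⟩ <;> rcases b with b | ⟨j, z⟩
      · exact Or.inl rfl
      · exact Or.inl rfl
      · exact Or.inr (Or.inl rfl)
      · rcases h2 with h | h
        · have : i = j := h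
          subst this
          exact Or.inr (Or.inr rfl)
        · have : j = i := h
          subst this
          exact Or.inr (Or.inr rfl)
    · rintro ⟨h1, h2⟩
      refine ⟨h1, ?_⟩
      rcases a with a | ⟨i, y⟩ <;> rcases b with b | ⟨j, z⟩
      · exact Or.inl trivial
      · exact Or.inl trivial
      · exact Or.inr trivial
      · simp only [dlab, Sum.elim_inr] at h2
        rcases h2 with h | h | h
        · exact absurd h (Nat.succ_ne_zero _)
        · exact absurd h (Nat.succ_ne_zero _)
        · left
          show i = j
          have : (i : ℕ) = (j : ℕ) := Nat.succ_injective h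
          exact Fin.ext this
  by_cases h : (joinCliques s nn).Adj a b
  · rw [if_pos h, if_pos (hiff.1 h)]
  · rw [if_neg h, if_neg (fun hc => h (hiff.2 hc))]

lemma card_dlab_zero (s : ℕ) {t : ℕ} (nn : Fin t → ℕ) :
    Fintype.card {a // dlab s nn a = 0} = s := by
  have hbij : Function.Bijective
      (fun a : Fin s => (⟨Sum.inl a, rfl⟩ : {a // dlab s nn a = 0})) := by
    constructor
    · intro a1 a2 h
      have := congrArg Subtype.val h
      exact Sum.inl_injective this
    · rintro ⟨a | ⟨i, y⟩, h⟩
      · exact ⟨a, Subtype.ext rfl⟩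
      · exact absurd h (Nat.succ_ne_zero _)
  exact ((Fintype.card_congr (Equiv.ofBijective _ hbij)).symm).trans (Fintype.card_fin s)

lemma card_dlab_succ (s : ℕ) {t : ℕ} (nn : Fin t → ℕ) (i : Fin t) :
    Fintype.card {a // dlab s nn a = (i : ℕ) + 1} = nn i := by
  have hbij : Function.Bijective
      (fun y : Fin (nn i) =>
        (⟨Sum.inr ⟨i, y⟩, rfl⟩ : {a // dlab s nn a = (i : ℕ) + 1})) := by
    constructor
    · intro y1 y2 h
      have h2 := congrArg Subtype.val h
      simp only [Sum.inr.injEq, Sigma.mk.inj_iff, heq_eq_eq, true_and] at h2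
      exact h2
    · rintro ⟨a | ⟨j, y⟩, h⟩
      · exact absurd h.symm (Nat.succ_ne_zero _)
      · have hj : j = i := by
          have : (j : ℕ) + 1 = (i : ℕ) + 1 := h
          exact Fin.ext (Nat.succ_injective this)
        subst hj
        exact ⟨y, Subtype.ext rfl⟩
  exact ((Fintype.card_congr (Equiv.ofBijective _ hbij)).symm).trans (Fintype.card_fin (nn i))

lemma card_dlab_large (s : ℕ) {t : ℕ} (nn : Fin t → ℕ) (j : ℕ) (hj : t < j) :
    Fintype.card {a // dlab s nn a = j} = 0 := by
  rw [Fintype.card_eq_zero_iff]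
  constructor
  rintro ⟨a | ⟨i, y⟩, h⟩
  · simp only [dlab, Sum.elim_inl] at h
    omega
  · simp only [dlab, Sum.elim_inr] at h
    have := i.2
    omega

variable {V : Type*} [Fintype V] [DecidableEq V]

lemma card_Ff (c : V → ℕ) (j : ℕ) : Fintype.card {v // c v = j} = (Ff c j).card := by
  rw [Fintype.card_subtype]
  rfl

/-- The iso lemma: a labeling with the right fiber sizes has the same spectral radius as
the corresponding join-of-cliques graph. -/
lemma specRad_lM_eq_joinCliques (s : ℕ) {t : ℕ} (mm : Fin t → ℕ) (c : V → ℕ)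
    (ha : ∀ v, c v ≤ t) (h0 : (Ff c 0).card = s)
    (hk : ∀ i : Fin t, (Ff c ((i : ℕ) + 1)).card = mm i) :
    specRad (adjMat (joinCliques s mm)) = specRad (lM c) := by
  have hcards : ∀ j : ℕ, Fintype.card {a // dlab s mm a = j} =
      Fintype.card {v // c v = j} := by
    intro j
    rcases j with _ | j'
    · rw [card_dlab_zero, card_Ff c, h0]
    · by_cases hj : j' < t
      · have h1 := card_dlab_succ s mm ⟨j', hj⟩
        have h2 := hk ⟨j', hj⟩
        simp only at h1 h2
        rw [h1, card_Ff c, h2]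
      · rw [card_dlab_large s mm _ (by omega), card_Ff c]
        symm
        rw [Finset.card_eq_zero, Finset.eq_empty_iff_forall_notMem]
        intro v hv
        have : c v = j' + 1 := by simpa [Ff] using hv
        have := ha v
        omega
  set e : (Fin s ⊕ (Σ i : Fin t, Fin (mm i))) ≃ V :=
    Equiv.ofFiberEquiv (f := dlab s mm) (g := c)
      (fun j => Fintype.equivOfCardEq (hcards j)) with he
  have hlab : ∀ a, c (e a) = dlab s mm a := fun a => Equiv.ofFiberEquiv_map _ a
  have hcomp : c ∘ e = dlab s mm := funext hlab
  rw [adjMat_joinCliques, ← hcomp, lM_comp c e, specRad_submatrix]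

section rowsum
variable {V : Type*} [Fintype V] [DecidableEq V]

/-- Max-degree bound on the Rayleigh quotient / spectral radius. -/
lemma specRad_le_maxdeg [Nonempty V] (c : V → ℕ) (D : ℝ)
    (hD : ∀ v, ∑ j, lM c v j ≤ D) : specRad (lM c) ≤ D := by
  apply specRad_le_of_bound (lM_herm c)
  intro x
  have key : ∀ i j : V, lM c i j * x j * x i ≤ lM c i j * (x i ^ 2 + x j ^ 2) / 2 := by
    intro i j
    have h1 : 0 ≤ lM c i j := lM_nonneg c i j
    nlinarith [sq_nonneg (x i - x j), sq_nonneg (x i + x j)]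
  calc ∑ i, (lM c).mulVec x i * x i = ∑ i, ∑ j, lM c i j * x j * x i := by
        apply Finset.sum_congr rfl
        intro i _
        rw [Matrix.mulVec, show (lM c i) ⬝ᵥ x = ∑ j, lM c i j * x j from rfl, Finset.sum_mul]
    _ ≤ ∑ i, ∑ j, lM c i j * (x i ^ 2 + x j ^ 2) / 2 :=
        Finset.sum_le_sum fun i _ => Finset.sum_le_sum fun j _ => key i j
    _ = ∑ i, (∑ j, lM c i j) * x i ^ 2 := by
        have e1 : ∑ i : V, ∑ j : V, lM c i j * (x i ^ 2 + x j ^ 2) / 2 =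
            (∑ i : V, ∑ j : V, lM c i j * x i ^ 2 / 2) +
              (∑ i : V, ∑ j : V, lM c i j * x j ^ 2 / 2) := by
          rw [← Finset.sum_add_distrib]
          apply Finset.sum_congr rfl
          intro i _
          rw [← Finset.sum_add_distrib]
          apply Finset.sum_congr rfl
          intro j _
          ring
        have e2 : ∑ i : V, ∑ j : V, lM c i j * x j ^ 2 / 2 =
            ∑ i : V, ∑ j : V, lM c i j * x i ^ 2 / 2 := by
          rw [Finset.sum_comm]
          apply Finset.sum_congr rfl
          intro i _
          apply Finset.sum_congr rfl
          intro j _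
          rw [lM_symm_entry]
        rw [e1, e2, ← Finset.sum_add_distrib]
        apply Finset.sum_congr rfl
        intro i _
        rw [← Finset.sum_add_distrib, Finset.sum_mul]
        apply Finset.sum_congr rfl
        intro j _
        ring
    _ ≤ ∑ i, D * x i ^ 2 :=
        Finset.sum_le_sum fun i _ => mul_le_mul_of_nonneg_right (hD i) (sq_nonneg _)
    _ = D * ∑ i, x i ^ 2 := by rw [Finset.mul_sum]

lemma rowsum_lM {c : V → ℕ} {v : V} (hv : c v ≠ 0) :
    ∑ j, lM c v j = ((Ff c 0).card : ℝ) + ((Ff c (c v)).card : ℝ) - 1 := by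
  have := mulVec_lM (c := c) (fun _ => (1:ℝ)) hv
  rw [Matrix.mulVec, show (lM c v) ⬝ᵥ (fun _ => (1:ℝ)) = ∑ j, lM c v j * 1 from rfl] at this
  simp only [mul_one] at this
  rw [this]
  simp [Finset.sum_const]

end rowsum

set_option maxHeartbeats 1000000 in
theorem stmt4 (s p : ℕ) {t : ℕ} (ht : 0 < t) (nn : Fin t → ℕ) (hanti : Antitone nn)
    (hp : ∀ i, p ≤ nn i) (n : ℕ) (hn : n = (∑ i, nn i) + s)
    (h1 : nn ⟨0, ht⟩ < n - s - p * (t - 1)) :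
    specRad (adjMat (joinCliques s nn)) <
      specRad (adjMat (joinCliques s
        (fun i : Fin t => if i = ⟨0, ht⟩ then n - s - p * (t - 1) else p))) := by
  set i0 : Fin t := ⟨0, ht⟩ with hi0
  set N := n - s - p * (t - 1) with hN
  set mm : Fin t → ℕ := fun i => if i = i0 then N else p with hmm
  rw [adjMat_joinCliques s nn]
  -- fiber cards of the canonical labeling
  have hF0 : (Ff (dlab s nn) 0).card = s := by
    rw [← card_Ff]
    exact card_dlab_zero s nn
  have hFsucc : ∀ i : Fin t, (Ff (dlab s nn) ((i : ℕ) + 1)).card = nn i := by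
    intro i
    rw [← card_Ff]
    exact card_dlab_succ s nn i
  have hFlarge : ∀ j, t < j → (Ff (dlab s nn) j).card = 0 := by
    intro j hj
    rw [← card_Ff]
    exact card_dlab_large s nn j hj
  have hF1 : (Ff (dlab s nn) 1).card = nn i0 := by
    have := hFsucc i0
    rwa [show ((i0 : ℕ) + 1) = 1 from by rw [hi0]] at this
  have ha : ∀ v, dlab s nn v ≤ t := by
    rintro (a | ⟨i, y⟩)
    · exact Nat.zero_le t
    · exact i.2
  have hle0 : ∀ i : Fin t, i0 ≤ i := by
    intro i
    rw [hi0]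
    exact Fin.mk_le_of_le_val (Nat.zero_le _)
  have hnn0pos : 0 < nn i0 := by
    by_contra h
    push_neg at h
    have hall : ∀ i, nn i = 0 := by
      intro i
      have := hanti (hle0 i)
      omega
    have hsum0 : ∑ i, nn i = 0 := Finset.sum_eq_zero fun i _ => hall i
    omega
  have hne0 : ∀ i : Fin t, i ≠ i0 → 1 ≤ (i : ℕ) := by
    intro i hi
    by_contra h
    push_neg at h
    have h0 : (i : ℕ) = 0 := by omega
    exact hi (Fin.ext (by rw [hi0]; exact h0))
  rcases Nat.eq_zero_or_pos s with hs0 | hspos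
  · -- disconnected case s = 0
    subst hs0
    haveI : Nonempty (Fin 0 ⊕ Σ i : Fin t, Fin (nn i)) :=
      ⟨Sum.inr ⟨i0, ⟨0, hnn0pos⟩⟩⟩
    have hLHS : specRad (lM (dlab 0 nn)) ≤ (nn i0 : ℝ) - 1 := by
      apply specRad_le_maxdeg
      rintro (a | ⟨i, y⟩)
      · exact absurd a.2 (by omega)
      · have hv0 : dlab 0 nn (Sum.inr ⟨i, y⟩) ≠ 0 := Nat.succ_ne_zero _
        rw [rowsum_lM hv0]
        rw [show dlab 0 nn (Sum.inr ⟨i, y⟩) = (i : ℕ) + 1 from rfl]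
        rw [hF0, hFsucc i]
        have := hanti (hle0 i)
        push_cast
        have : (nn i : ℝ) ≤ (nn i0 : ℝ) := by exact_mod_cast this
        linarith
    have hRHS : (N : ℝ) - 1 ≤ specRad (adjMat (joinCliques 0 mm)) := by
      rw [adjMat_joinCliques]
      have hcard1 : (Ff (dlab 0 mm) 1).card = N := by
        have h2 := card_dlab_succ 0 mm i0
        rw [← card_Ff]
        rw [show ((i0 : ℕ) + 1) = 1 from by rw [hi0]] at h2
        rw [h2, hmm]
        simp
      have hne : (Ff (dlab 0 mm) 1).Nonempty := by
        rw [← Finset.card_pos, hcard1]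
        omega
      have := clique_le_specRad (dlab 0 mm) (Ff (dlab 0 mm) 1) ?_ hne
      · rwa [hcard1] at this
      · intro a haa b hbb _
        have ha1 : dlab 0 mm a = 1 := by simpa [Ff] using haa
        have hb1 : dlab 0 mm b = 1 := by simpa [Ff] using hbb
        exact Or.inr (Or.inr (ha1.trans hb1.symm))
    have hmid : (nn i0 : ℝ) - 1 < (N : ℝ) - 1 := by
      have : (nn i0 : ℝ) < (N : ℝ) := by exact_mod_cast h1
      linarith
    linarith
  · -- connected case s ≥ 1
    set R := specRad (adjMat (joinCliques s mm)) with hR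
    have hcardV : Fintype.card (Fin s ⊕ Σ i : Fin t, Fin (nn i)) = n := by
      rw [Fintype.card_sum, Fintype.card_sigma]
      simp only [Fintype.card_fin]
      omega
    have hpart : ∀ c : (Fin s ⊕ Σ i : Fin t, Fin (nn i)) → ℕ, (∀ v, c v ≤ t) →
        (Ff c 0).card + (Ff c 1).card + (∑ k ∈ Finset.Icc 2 t, (Ff c k).card) = n := by
      intro c hc
      have hsplit : Finset.range (t + 1) = insert 0 (insert 1 (Finset.Icc 2 t)) := by
        ext j
        simp only [Finset.mem_range, Finset.mem_insert, Finset.mem_Icc]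
        omega
      have hfw := Finset.card_eq_sum_card_fiberwise
        (f := c) (s := (Finset.univ : Finset (Fin s ⊕ Σ i : Fin t, Fin (nn i))))
        (t := Finset.range (t + 1)) (fun v _ => Finset.mem_range.2 (by
          have := hc v; omega))
      rw [hsplit, Finset.sum_insert (by simp), Finset.sum_insert (by
        simp [Finset.mem_Icc])] at hfw
      rw [Finset.card_univ, hcardV] at hfw
      simp only [Ff]
      omega
    have hbase : ∀ c : (Fin s ⊕ Σ i : Fin t, Fin (nn i)) → ℕ, (∀ v, c v ≤ t) →
        (Ff c 0).card = s →
        (∀ k, 2 ≤ k → (Ff c k).card ≤ (Ff c 1).card) →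
        (∀ k, 2 ≤ k → k ≤ t → (Ff c k).card = p) → specRad (lM c) ≤ R := by
      intro c hc h0 _ hkp
      have hIcc : ∑ k ∈ Finset.Icc 2 t, (Ff c k).card = p * (t - 1) := by
        rw [Finset.sum_congr rfl (fun k hk =>
          hkp k (Finset.mem_Icc.1 hk).1 (Finset.mem_Icc.1 hk).2)]
        rw [Finset.sum_const, Nat.card_Icc, smul_eq_mul,
          show t + 1 - 2 = t - 1 from by omega, Nat.mul_comm]
      have h1c : (Ff c 1).card = N := by
        have hpc := hpart c hc
        rw [h0, hIcc] at hpc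
        omega
      have hiso := specRad_lM_eq_joinCliques s mm c hc h0 ?_
      · rw [hR]
        exact le_of_eq hiso.symm
      · intro i
        by_cases hi : i = i0
        · rw [hi, show ((i0 : ℕ) + 1) = 1 from by rw [hi0], h1c, hmm]
          simp
        · have h2 : 2 ≤ (i : ℕ) + 1 := by have := hne0 i hi; omega
          rw [hkp _ h2 (by have := i.2; omega), hmm]
          simp [hi]
    -- initial invariants
    have inv_b : (Ff (dlab s nn) 0).Nonempty := by
      rw [← Finset.card_pos, hF0]
      exact hspos
    have inv_c : ∀ k, 2 ≤ k → (Ff (dlab s nn) k).card ≤ (Ff (dlab s nn) 1).card := by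
      intro k hk2
      rw [hF1]
      by_cases hkt : k ≤ t
      · have hkk : k = (((⟨k - 1, by omega⟩ : Fin t)) : ℕ) + 1 := by simp; omega
        rw [hkk, hFsucc]
        exact hanti (hle0 _)
      · rw [hFlarge k (by omega)]
        exact Nat.zero_le _
    have inv_d : ∀ k, 2 ≤ k → k ≤ t → p ≤ (Ff (dlab s nn) k).card := by
      intro k hk2 hkt
      have hkk : k = (((⟨k - 1, by omega⟩ : Fin t)) : ℕ) + 1 := by simp; omega
      rw [hkk, hFsucc]
      exact hp _
    -- strict witness
    have hex : ∃ k, 2 ≤ k ∧ k ≤ t ∧ p < (Ff (dlab s nn) k).card := by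
      by_contra hcon
      push_neg at hcon
      have hallp : ∀ i : Fin t, i ≠ i0 → nn i = p := by
        intro i hi
        have h2 : 2 ≤ (i : ℕ) + 1 := by have := hne0 i hi; omega
        have := hcon ((i : ℕ) + 1) h2 (by have := i.2; omega)
        rw [hFsucc i] at this
        exact le_antisymm this (hp i)
      have hsum : ∑ i, nn i = nn i0 + p * (t - 1) := by
        rw [← Finset.add_sum_erase _ nn (Finset.mem_univ i0)]
        congr 1
        rw [Finset.sum_congr rfl (fun i hi => hallp i (Finset.ne_of_mem_erase hi)),
          Finset.sum_const, Finset.card_erase_of_mem (Finset.mem_univ i0),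
          Finset.card_univ, Fintype.card_fin, smul_eq_mul, Nat.mul_comm]
      omega
    obtain ⟨_, hlt⟩ := chain_le t p s R hbase
      (∑ k ∈ Finset.Icc 2 t, (Ff (dlab s nn) k).card) (dlab s nn) rfl
      ha inv_b hF0 inv_c inv_d
    exact hlt hex
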